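/- (Appendix Lemma 2.) Let n ≥ 1 and let a_1, …, a_n be integers with a_i ≥ 2 for all i. Then gcd(q′ + 1, q) = gcd(p − 1, q) and gcd(q′ − 1, q) = gcd(p + 1, q). In particular, (q′+1)/q is a reduced fraction if and only if (p−1)/q is, and (q′−1)/q is reduced if and only if (p+1)/q is. -/

import Mathlib

/- One step of the recursion for the numerators/denominators of negative continued
fractions: the state `(x, y)` holds the two previous values `(V(b_1,…,b_{k-1}), V(b_1,…,b_k))`
(with the conventions `P() = 1`, `P(before empty) = 0`, `Q() = 0`, `Q(before empty) = -1`),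
and a new entry `b` updates it to `(y, b * y - x)`, implementing
`V(b_1,…,b_{k+1}) = b_{k+1} · V(b_1,…,b_k) − V(b_1,…,b_{k-1})`. -/
def cfStep (s : ℤ × ℤ) (b : ℤ) : ℤ × ℤ := (s.2, b * s.2 - s.1)

/-- `cfP [b_1,…,b_m] = P(b_1,…,b_m)`: the numerator of the negative continued fraction
`[b_1,…,b_m]`, defined by `P() = 1`, `P(b_1) = b_1`,
`P(b_1,…,b_k) = b_k · P(b_1,…,b_{k-1}) − P(b_1,…,b_{k-2})`. -/
def cfP (l : List ℤ) : ℤ := (l.foldl cfStep (0, 1)).2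

/-- `cfQ [b_1,…,b_m] = Q(b_1,…,b_m)`: the denominator of the negative continued fraction
`[b_1,…,b_m]`, defined by `Q() = 0`, `Q(b_1) = 1`,
`Q(b_1,…,b_k) = b_k · Q(b_1,…,b_{k-1}) − Q(b_1,…,b_{k-2})`. -/
def cfQ (l : List ℤ) : ℤ := (l.foldl cfStep (-1, 0)).2

/-- The list `[a 1, a 2, …, a m]`. -/
def cfList (a : ℕ → ℤ) (m : ℕ) : List ℤ := (List.range m).map fun i => a (i + 1)

/-- Determinant invariant for the pair of foldl states. -/
lemma cf_det_aux (l : List ℤ) (s t : ℤ × ℤ) (h : s.2 * t.1 - s.1 * t.2 = -1) :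
    (l.foldl cfStep s).2 * (l.foldl cfStep t).1
      - (l.foldl cfStep s).1 * (l.foldl cfStep t).2 = -1 := by
  induction l generalizing s t with
  | nil => simpa using h
  | cons b l ih =>
      simp only [List.foldl_cons]
      apply ih
      simp only [cfStep]
      linear_combination h

/-- Mutual Bézout-type relations give equal gcds. -/
lemma gcd_eq_of_combo (x y q u v u' v' : ℤ) (h1 : y = u * x + v * q)
    (h2 : x = u' * y + v' * q) : Int.gcd x q = Int.gcd y q := by
  apply Nat.dvd_antisymm <;> rw [← Int.natCast_dvd_natCast]
  · apply Int.dvd_coe_gcd _ (Int.gcd_dvd_right _ _)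
    rw [h1]
    exact dvd_add ((Int.gcd_dvd_left x q).mul_left u) ((Int.gcd_dvd_right x q).mul_left v)
  · apply Int.dvd_coe_gcd _ (Int.gcd_dvd_right _ _)
    rw [h2]
    exact dvd_add ((Int.gcd_dvd_left y q).mul_left u') ((Int.gcd_dvd_right y q).mul_left v')

lemma cfList_succ (a : ℕ → ℤ) (m : ℕ) :
    cfList a (m + 1) = cfList a m ++ [a (m + 1)] := by
  simp [cfList, List.range_succ]

/-- Appendix Lemma 2: `gcd (q' + 1) q = gcd (p - 1) q` and
`gcd (q' - 1) q = gcd (p + 1) q`; in particular the corresponding fractions are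
simultaneously reduced. -/
theorem cf_appendix_lemma2 (n : ℕ) (hn : 1 ≤ n) (a : ℕ → ℤ)
    (ha : ∀ i, 1 ≤ i → i ≤ n → 2 ≤ a i) :
    Int.gcd (cfQ (cfList a (n - 1)) + 1) (cfQ (cfList a n))
        = Int.gcd (cfP (cfList a n) - 1) (cfQ (cfList a n)) ∧
    Int.gcd (cfQ (cfList a (n - 1)) - 1) (cfQ (cfList a n))
        = Int.gcd (cfP (cfList a n) + 1) (cfQ (cfList a n)) ∧
    (Int.gcd (cfQ (cfList a (n - 1)) + 1) (cfQ (cfList a n)) = 1 ↔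
      Int.gcd (cfP (cfList a n) - 1) (cfQ (cfList a n)) = 1) ∧
    (Int.gcd (cfQ (cfList a (n - 1)) - 1) (cfQ (cfList a n)) = 1 ↔
      Int.gcd (cfP (cfList a n) + 1) (cfQ (cfList a n)) = 1) := by
  obtain ⟨m, rfl⟩ : ∃ m, n = m + 1 := ⟨n - 1, (Nat.succ_pred_eq_of_pos hn).symm⟩
  set l := cfList a (m + 1) with hl
  have hm : m + 1 - 1 = m := rfl
  set p := cfP l with hp
  set q := cfQ l with hq
  set p'' := (l.foldl cfStep (0, 1)).1 with hp''
  set q' := (l.foldl cfStep (-1, 0)).1 with hq'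
  have hdet : p * q' - p'' * q = -1 := cf_det_aux l (0, 1) (-1, 0) (by norm_num)
  have hQ' : cfQ (cfList a m) = q' := by
    rw [hq', hl, cfList_succ, List.foldl_append]
    rfl
  rw [hm, hQ']
  have h1 : Int.gcd (q' + 1) q = Int.gcd (p - 1) q :=
    gcd_eq_of_combo _ _ _ p (-p'') (-q') p''
      (by linear_combination -hdet) (by linear_combination hdet)
  have h2 : Int.gcd (q' - 1) q = Int.gcd (p + 1) q :=
    gcd_eq_of_combo _ _ _ (-p) p'' q' (-p'')
      (by linear_combination hdet) (by linear_combination -hdet)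
  exact ⟨h1, h2, by rw [h1], by rw [h2]⟩
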